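/- Let (Ω, ℙ) be a probability space carrying random variables Z, Υ, Θ with Z standard Gaussian, Z independent of the pair (Θ, Υ), and Υ ≥ 0 almost surely. Let L > 0 satisfy ℙ[Υ > L] ≤ L, and let τ > 0 and t > 0. Then ℙ[|τ·√Υ·Z + Θ| ≥ t] ≥ ℙ[|Θ| > 2t] − 2·Q(t/(τ√L)) − L. -/

import Mathlib

open MeasureTheory ProbabilityTheory

/-- Standard Gaussian tail probability `Q(r) = ℙ[ξ > r]` for `ξ ~ N(0,1)`. -/
noncomputable def gaussQ (r : ℝ) : ℝ :=
  ((gaussianReal 0 1) (Set.Ioi r)).toReal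

lemma gauss_symm (r : ℝ) :
    (gaussianReal 0 1) (Set.Iio (-r)) = (gaussianReal 0 1) (Set.Ioi r) := by
  have h : (gaussianReal 0 1).map ((-1 : ℝ) * ·) = gaussianReal 0 1 := by
    rw [gaussianReal_map_const_mul]
    norm_num
  have := congrArg (fun m => m (Set.Iio (-r))) h
  simp only [Measure.map_apply (measurable_const_mul (-1 : ℝ)) measurableSet_Iio] at this
  rw [← this]
  congr 1
  ext x
  simp only [Set.mem_preimage, Set.mem_Iio, Set.mem_Ioi]
  constructor <;> intro <;> linarith

/-- Lower bound on the proportion of total positives (proof of Theorem 1):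
`ℙ[|τ√Υ·Z + Θ| ≥ t] ≥ ℙ[|Θ| > 2t] − 2Q(t/(τ√L)) − L`. -/
theorem stmt14 {Ω : Type*} [MeasurableSpace Ω] (μ : Measure Ω) [IsProbabilityMeasure μ]
    (Z Υ Θ : Ω → ℝ) (hZm : Measurable Z) (hΥm : Measurable Υ) (hΘm : Measurable Θ)
    (hZ : μ.map Z = gaussianReal 0 1)
    (hindep : IndepFun Z (fun ω => (Θ ω, Υ ω)) μ)
    (hΥ0 : ∀ᵐ ω ∂μ, 0 ≤ Υ ω)
    (L τ t : ℝ) (hL : 0 < L) (hτ : 0 < τ) (ht : 0 < t)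
    (hLtail : (μ {ω | L < Υ ω}).toReal ≤ L) :
    (μ {ω | 2 * t < |Θ ω|}).toReal - 2 * gaussQ (t / (τ * Real.sqrt L)) - L ≤
      (μ {ω | t ≤ |τ * Real.sqrt (Υ ω) * Z ω + Θ ω|}).toReal := by
  set r : ℝ := t / (τ * Real.sqrt L) with hr
  have hsL : 0 < Real.sqrt L := Real.sqrt_pos.mpr hL
  have hτL : 0 < τ * Real.sqrt L := mul_pos hτ hsL
  -- set inclusion
  have hincl : {ω | 2 * t < |Θ ω|} ⊆
      {ω | t ≤ |τ * Real.sqrt (Υ ω) * Z ω + Θ ω|} ∪ {ω | L < Υ ω} ∪ {ω | r < |Z ω|} := by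
    intro ω hω
    simp only [Set.mem_setOf_eq] at hω
    by_cases h1 : t ≤ |τ * Real.sqrt (Υ ω) * Z ω + Θ ω|
    · exact Or.inl (Or.inl h1)
    by_cases h2 : L < Υ ω
    · exact Or.inl (Or.inr h2)
    push_neg at h1 h2
    right
    simp only [Set.mem_setOf_eq]
    -- |W| > t where W = τ√Υ Z
    have hW : t < |τ * Real.sqrt (Υ ω) * Z ω| := by
      have := abs_sub_abs_le_abs_sub (Θ ω) (-(τ * Real.sqrt (Υ ω) * Z ω))
      simp only [sub_neg_eq_add, abs_neg] at this
      have habs : |Θ ω + τ * Real.sqrt (Υ ω) * Z ω|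
          = |τ * Real.sqrt (Υ ω) * Z ω + Θ ω| := by rw [add_comm]
      linarith [this, habs ▸ this]
    have hnn : (0:ℝ) ≤ τ * Real.sqrt (Υ ω) := mul_nonneg hτ.le (Real.sqrt_nonneg _)
    rw [abs_mul, abs_of_nonneg hnn] at hW
    have hle : τ * Real.sqrt (Υ ω) ≤ τ * Real.sqrt L :=
      mul_le_mul_of_nonneg_left (Real.sqrt_le_sqrt h2) hτ.le
    have : t < τ * Real.sqrt L * |Z ω| :=
      lt_of_lt_of_le hW (mul_le_mul_of_nonneg_right hle (abs_nonneg _))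
    rw [hr, div_lt_iff₀ hτL]
    linarith
  -- measure inequality
  have hmeas : μ {ω | 2 * t < |Θ ω|} ≤
      μ {ω | t ≤ |τ * Real.sqrt (Υ ω) * Z ω + Θ ω|} + μ {ω | L < Υ ω} + μ {ω | r < |Z ω|} :=
    le_trans (measure_mono hincl)
      (le_trans (measure_union_le _ _) (add_le_add (measure_union_le _ _) le_rfl))
  -- compute Gaussian tail
  have hZtail : μ {ω | r < |Z ω|} = (gaussianReal 0 1) (Set.Ioi r)
      + (gaussianReal 0 1) (Set.Ioi r) := by
    have hset : {ω | r < |Z ω|} = Z ⁻¹' (Set.Iio (-r) ∪ Set.Ioi r) := by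
      ext ω
      simp only [Set.mem_setOf_eq, Set.mem_preimage, Set.mem_union, Set.mem_Iio, Set.mem_Ioi,
        lt_abs, lt_neg]
      tauto
    rw [hset, ← Measure.map_apply hZm ((measurableSet_Iio).union measurableSet_Ioi), hZ,
      measure_union _ measurableSet_Ioi, gauss_symm]
    intro s hs1 hs2 x hx
    have h1 := hs1 hx
    have h2 := hs2 hx
    simp only [Set.mem_Iio, Set.mem_Ioi] at h1 h2
    have hrpos : 0 < r := div_pos ht hτL
    exact absurd rfl (by simp; linarith : x ∉ ({x} : Set ℝ)).elim
  -- convert to reals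
  have hfin : ∀ s : Set Ω, μ s ≠ ⊤ := fun s => measure_ne_top μ s
  have h2Q : (μ {ω | r < |Z ω|}).toReal = 2 * gaussQ r := by
    rw [hZtail, ENNReal.toReal_add (measure_ne_top _ _) (measure_ne_top _ _)]
    unfold gaussQ; ring
  have := ENNReal.toReal_mono (by
      exact ENNReal.add_ne_top.mpr ⟨ENNReal.add_ne_top.mpr ⟨hfin _, hfin _⟩, hfin _⟩) hmeas
  rw [ENNReal.toReal_add (ENNReal.add_ne_top.mpr ⟨hfin _, hfin _⟩) (hfin _),
    ENNReal.toReal_add (hfin _) (hfin _), h2Q] at this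
  linarith
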